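/- A discrete-time counting process (N_t) with jump amounts J_0, J_1, ... satisfies the M^{(a)}-UOSP if and only if it is an a-mixed geometric process; i.e., P{J_0=j_0,...,J_t=j_t | N_t=k} = Π_h a(j_h)/C^{(a)}_{t+1,k} for all t,k and (j_0,...,j_t) ∈ A_{t+1,k} holds if and only if there exist functions R_t : ℕ → [0,∞) with P{J_0=j_0,...,J_t=j_t} = R_t(Σ_h j_h)·Π_{h=0}^t a(j_h) for all t. -/

import Mathlib

open MeasureTheory

/-- The set `A_{n,r}` of `n`-tuples of nonnegative integers with each entry `≤ r`
and sum equal to `r`. -/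
def Afin (n r : ℕ) : Finset (Fin n → ℕ) :=
  (Fintype.piFinset fun _ => Finset.range (r + 1)).filter fun x => ∑ j, x j = r

/-- The normalization constant `C^{(a)}_{n,r} = ∑_{ξ ∈ A_{n,r}} ∏_j a(ξ_j)`. -/
noncomputable def Cconst (a : ℕ → ℝ) (n r : ℕ) : ℝ :=
  ∑ x ∈ Afin n r, ∏ j, a (x j)

lemma Cpos (a : ℕ → ℝ) (ha : ∀ x, 0 < a x) (t k : ℕ) : 0 < Cconst a (t + 1) k := by
  apply Finset.sum_pos
  · intro x _; exact Finset.prod_pos fun j _ => ha _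
  · refine ⟨fun i => if i = 0 then k else 0, ?_⟩
    simp only [Afin, Finset.mem_filter, Fintype.mem_piFinset, Finset.mem_range]
    constructor
    · intro i; split <;> omega
    · simp [Finset.sum_ite_eq']

lemma partition {Ω : Type*} [MeasurableSpace Ω] (μ : Measure Ω) [IsProbabilityMeasure μ]
    (J : ℕ → Ω → ℕ) (hJ : ∀ h, Measurable (J h)) (t k : ℕ) :
    (μ {ω | ∑ h ∈ Finset.range (t + 1), J h ω = k}).toReal
      = ∑ j ∈ Afin (t + 1) k, (μ {ω | ∀ h : Fin (t + 1), J h ω = j h}).toReal := by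
  have hset : {ω | ∑ h ∈ Finset.range (t + 1), J h ω = k}
      = ⋃ j ∈ Afin (t + 1) k, {ω | ∀ h : Fin (t + 1), J h ω = j h} := by
    ext ω
    simp only [Set.mem_setOf_eq, Set.mem_iUnion]
    constructor
    · intro hs
      refine ⟨fun h => J h ω, ?_, fun h => rfl⟩
      simp only [Afin, Finset.mem_filter, Fintype.mem_piFinset, Finset.mem_range]
      refine ⟨fun i => ?_, ?_⟩
      swap
      · rw [Fin.sum_univ_eq_sum_range (fun h => J h ω)]; exact hs
      have : J (i : ℕ) ω ≤ ∑ h ∈ Finset.range (t + 1), J h ω :=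
        Finset.single_le_sum (f := fun h => J h ω) (fun _ _ => Nat.zero_le _)
          (Finset.mem_range.2 i.isLt)
      omega
    · rintro ⟨j, hj, hω⟩
      simp only [Afin, Finset.mem_filter] at hj
      rw [← hj.2, ← Fin.sum_univ_eq_sum_range (fun h => J h ω)]
      · exact Finset.sum_congr rfl fun i _ => hω i
  have hmeas : ∀ j : Fin (t + 1) → ℕ, MeasurableSet {ω | ∀ h : Fin (t + 1), J h ω = j h} := by
    intro j
    have : {ω | ∀ h : Fin (t + 1), J h ω = j h} = ⋂ h : Fin (t + 1), (J h) ⁻¹' {j h} := by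
      ext ω; simp
    rw [this]
    exact MeasurableSet.iInter fun h => (hJ h) (measurableSet_singleton _)
  rw [hset, measure_biUnion_finset ?_ (fun j _ => hmeas j)]
  · rw [ENNReal.toReal_sum fun j _ => measure_ne_top μ _]
  · intro x _ y _ hxy
    rw [Function.onFun, Set.disjoint_left]
    intro ω hx hy
    exact hxy (funext fun h => (hx h).symm.trans (hy h))

/-- A discrete-time counting process `N_t = J_0 + ⋯ + J_t` satisfies the
`M^{(a)}`-UOSP (i.e. `P{J_0 = j_0, …, J_t = j_t | N_t = k} = ∏_h a(j_h)/C^{(a)}_{t+1,k}`,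
stated in multiplied-out form) if and only if it is an `a`-mixed geometric process
(i.e. there are nonnegative functions `R_t` with
`P{J_0 = j_0, …, J_t = j_t} = R_t(∑_h j_h) · ∏_h a(j_h)`). -/
theorem Ma_UOSP_iff_a_mixed_geometric
    {Ω : Type*} [MeasurableSpace Ω] (μ : Measure Ω) [IsProbabilityMeasure μ]
    (J : ℕ → Ω → ℕ) (hJ : ∀ h, Measurable (J h))
    (a : ℕ → ℝ) (ha : ∀ x, 0 < a x) :
    (∀ (t k : ℕ) (j : Fin (t + 1) → ℕ), (∑ h, j h) = k →
        (μ {ω | ∀ h : Fin (t + 1), J h ω = j h}).toReal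
          = (∏ h, a (j h)) / Cconst a (t + 1) k
              * (μ {ω | ∑ h ∈ Finset.range (t + 1), J h ω = k}).toReal)
      ↔ ∃ R : ℕ → ℕ → ℝ, (∀ t k, 0 ≤ R t k) ∧
          ∀ (t : ℕ) (j : Fin (t + 1) → ℕ),
            (μ {ω | ∀ h : Fin (t + 1), J h ω = j h}).toReal
              = R t (∑ h, j h) * ∏ h, a (j h) := by
  constructor
  · intro H
    refine ⟨fun t k => (μ {ω | ∑ h ∈ Finset.range (t + 1), J h ω = k}).toReal
        / Cconst a (t + 1) k, fun t k => div_nonneg ENNReal.toReal_nonneg (Cpos a ha t k).le,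
      fun t j => ?_⟩
    rw [H t (∑ h, j h) j rfl]
    ring
  · rintro ⟨R, hR, hRe⟩ t k j hjk
    have hsum : (μ {ω | ∑ h ∈ Finset.range (t + 1), J h ω = k}).toReal
        = R t k * Cconst a (t + 1) k := by
      rw [partition μ J hJ t k, Cconst, Finset.mul_sum]
      refine Finset.sum_congr rfl fun x hx => ?_
      rw [hRe t x]
      simp only [Afin, Finset.mem_filter] at hx
      rw [hx.2]
    rw [hsum, hRe t j, hjk]
    field_simp [(Cpos a ha t k).ne']
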